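/- (Theorem 1.) Let m ≥ 1 be an integer, N = 2^m, k = 2m, let M be the SAFFRON matrix, let j₀ ∈ Fin N, and let y' : Fin k → Bool be the column of M indexed by j₀, i.e., y' i = M i j₀. Let p₀ ∈ (0, 1], λ ∈ (0, 1), ξ > 0 with 1/2 + ξ ≤ (1 − λ)·p₀, and let δ ∈ (0, 1). Let c ≥ 1 be an integer with c ≥ 2·ln(2m/δ)/(p₀·λ²), and let Y : (Fin k × Fin c) → Ω → Bool be a mutually independent family of Boolean random variables on a probability space (Ω, μ) such that μ({ω : Y (i, s) ω = y' i}) ≥ p₀ for all i ∈ Fin k and s ∈ Fin c. Then μ({ω : ∀ i ∈ Fin k, 2·|{s : Y (i, s) ω = y' i}| > c}) ≥ 1 − δ; that is, with probability at least 1 − δ, coordinatewise strict-majority voting over the c repeated noisy observations recovers the entire column M_{j₀}, and hence identifies the defective index j₀. -/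

import Mathlib

open MeasureTheory ProbabilityTheory

/-- The SAFFRON matrix for `N = 2 ^ m`: rows indexed by `Fin (2 * m)`, columns by
`Fin (2 ^ m)`; row `i < m` is the `i`-th bit of the column index, row `m ≤ i < 2m`
is the complement of the `(i - m)`-th bit. -/
def saffron (m : ℕ) (i : Fin (2 * m)) (j : Fin (2 ^ m)) : Bool :=
  if (i : ℕ) < m then Nat.testBit (j : ℕ) (i : ℕ) else !Nat.testBit (j : ℕ) ((i : ℕ) - m)


open Finset in
private lemma exp_le_quad_aux {t : ℝ} (ht : t ≤ 0) : Real.exp t ≤ 1 + t + t^2/2 := by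
  have H : ∀ x : ℝ, HasDerivAt (fun t : ℝ => 1 + t + t^2/2 - Real.exp t)
      (1 + x - Real.exp x) x := by
    intro x
    have h1 : HasDerivAt (fun t : ℝ => 1 + t + t^2/2 - Real.exp t)
        (0 + 1 + (↑2 * x^1)/2 - Real.exp x) x :=
      (((hasDerivAt_const x (1:ℝ)).add (hasDerivAt_id x)).add
        ((hasDerivAt_pow 2 x).div_const 2)).sub (Real.hasDerivAt_exp x)
    convert h1 using 1; ring
  have anti : Antitone (fun t : ℝ => 1 + t + t^2/2 - Real.exp t) := by
    apply antitone_of_deriv_nonpos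
    · exact fun x => (H x).differentiableAt
    · intro x; rw [(H x).deriv]; linarith [Real.add_one_le_exp x]
  have h0 := anti ht
  simp only [Real.exp_zero] at h0
  nlinarith [h0]

/-- mgf of a Boolean indicator variable. -/
private lemma mgf_bool_indicator_aux {Ω : Type*} [MeasurableSpace Ω] (μ : Measure Ω)
    [IsProbabilityMeasure μ] {Z : Ω → Bool} (hZ : Measurable Z) (b : Bool) (t : ℝ) :
    mgf (fun ω => if Z ω = b then (1:ℝ) else 0) μ t
      = 1 + (Real.exp t - 1) * (μ {ω | Z ω = b}).toReal := by
  have hA : MeasurableSet {ω | Z ω = b} := hZ (measurableSet_singleton b)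
  have hXeq : (fun ω => if Z ω = b then (1:ℝ) else 0)
      = Set.indicator {ω | Z ω = b} (fun _ => (1:ℝ)) := by
    ext ω; by_cases h : Z ω = b <;> simp [h, Set.indicator]
  have hXint : Integrable (fun ω => if Z ω = b then (1:ℝ) else 0) μ := by
    rw [hXeq]; exact (integrable_const (1:ℝ)).indicator hA
  have hfun : (fun ω => Real.exp (t * (if Z ω = b then (1:ℝ) else 0)))
      = fun ω => 1 + (Real.exp t - 1) * (if Z ω = b then (1:ℝ) else 0) := by
    ext ω; by_cases h : Z ω = b <;> simp [h]
  rw [mgf, hfun, integral_add (integrable_const 1) (hXint.const_mul _),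
    integral_const, integral_const_mul]
  have : ∫ ω, (if Z ω = b then (1:ℝ) else 0) ∂μ = (μ {ω | Z ω = b}).toReal := by
    rw [hXeq, integral_indicator_const (1:ℝ) hA, smul_eq_mul, mul_one]
    rfl
  rw [this]; simp

set_option maxHeartbeats 1000000 in
/-- Theorem 1: Let `y'` be the column of the SAFFRON matrix indexed by
the defective item `j₀`, and let `Y (i, s)` (`i < k = 2m`, `s < c`) be mutually
independent noisy observations, each agreeing with `y' i` with probability at least
`p₀`, where `1/2 + ξ ≤ (1 − lam) p₀` and `c ≥ 2 ln(2m/δ)/(p₀ lam²)`. Then with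
probability at least `1 − δ`, for every row `i` a strict majority of the `c`
observations equals `y' i`, so majority voting recovers the whole column `M_{j₀}` and
hence identifies `j₀`. -/
theorem decode_one_defective {Ω : Type*} [MeasurableSpace Ω] (μ : Measure Ω)
    [IsProbabilityMeasure μ] (m : ℕ) (hm : 1 ≤ m) (j₀ : Fin (2 ^ m))
    (p₀ lam ξ δ : ℝ) (hp₀0 : 0 < p₀) (hp₀1 : p₀ ≤ 1)
    (hlam0 : 0 < lam) (hlam1 : lam < 1) (hξ : 0 < ξ)
    (hcond : 1 / 2 + ξ ≤ (1 - lam) * p₀) (hδ0 : 0 < δ) (hδ1 : δ < 1)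
    (c : ℕ) (hc : 1 ≤ c)
    (hclb : 2 * Real.log (2 * m / δ) / (p₀ * lam ^ 2) ≤ (c : ℝ))
    (Y : Fin (2 * m) × Fin c → Ω → Bool) (hmeas : ∀ p, Measurable (Y p))
    (hindep : iIndepFun Y μ)
    (hp : ∀ (i : Fin (2 * m)) (s : Fin c),
      ENNReal.ofReal p₀ ≤ μ {ω | Y (i, s) ω = saffron m i j₀}) :
    ENNReal.ofReal (1 - δ) ≤
      μ {ω | ∀ i : Fin (2 * m),
        c < 2 * (Finset.univ.filter
          (fun s : Fin c => Y (i, s) ω = saffron m i j₀)).card} := by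
  classical
  set t : ℝ := -lam with ht_def
  have ht0 : t ≤ 0 := by simp [ht_def]; linarith
  have hm2 : (0:ℝ) < 2 * m := by
    have : (1:ℝ) ≤ (m:ℝ) := by exact_mod_cast hm
    linarith
  set X : Fin (2 * m) × Fin c → Ω → ℝ :=
    fun p ω => if Y p ω = saffron m p.1 j₀ then 1 else 0 with hX_def
  have hXmeas : ∀ p, Measurable (X p) := by
    intro p
    exact Measurable.comp (f := Y p)
      (g := fun b => if b = saffron m p.1 j₀ then (1:ℝ) else 0)
      (measurable_from_top) (hmeas p)
  have hXindep : iIndepFun X μ := by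
    have := hindep.comp (fun p (b : Bool) => if b = saffron m p.1 j₀ then (1:ℝ) else 0)
      (fun p => measurable_from_top)
    exact this
  set bad : Fin (2 * m) → Set Ω := fun i =>
    {ω | ¬ (c < 2 * (Finset.univ.filter
      (fun s : Fin c => Y (i, s) ω = saffron m i j₀)).card)} with hbad_def
  have hcard_meas : ∀ i : Fin (2 * m), Measurable (fun ω =>
      (Finset.univ.filter (fun s : Fin c => Y (i, s) ω = saffron m i j₀)).card) := by
    intro i
    have : (fun ω => (Finset.univ.filter
        (fun s : Fin c => Y (i, s) ω = saffron m i j₀)).card)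
        = fun ω => ∑ s : Fin c, if Y (i, s) ω = saffron m i j₀ then 1 else 0 := by
      ext ω; rw [Finset.card_filter]
    rw [this]
    exact Finset.measurable_sum _ (fun s _ => Measurable.comp (f := Y (i, s))
      (g := fun b => if b = saffron m i j₀ then (1:ℕ) else 0)
      measurable_from_top (hmeas _))
  have hbad_meas : ∀ i, MeasurableSet (bad i) := by
    intro i
    exact (hcard_meas i) (MeasurableSet.of_discrete
      (s := {n : ℕ | ¬ (c < 2 * n)}))
  have key : ∀ i : Fin (2 * m), μ (bad i) ≤ ENNReal.ofReal (δ / (2 * m)) := by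
    intro i
    set T : Finset (Fin (2 * m) × Fin c) :=
      Finset.univ.image (fun s : Fin c => ((i, s) : Fin (2 * m) × Fin c)) with hT_def
    have hinj : Function.Injective (fun s : Fin c => ((i, s) : Fin (2 * m) × Fin c)) := by
      intro a b hab; simpa using hab
    have hTcard : T.card = c := by
      rw [hT_def, Finset.card_image_of_injective _ hinj, Finset.card_univ, Fintype.card_fin]
    -- integrability of exp(t * X p)
    have hXnn : ∀ p ω, 0 ≤ X p ω := by
      intro p ω
      show (0:ℝ) ≤ if Y p ω = saffron m p.1 j₀ then 1 else 0
      split <;> norm_num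
    have hint : ∀ p ∈ T, Integrable (fun ω => Real.exp (t * X p ω)) μ := by
      intro p _
      refine Integrable.mono' (integrable_const (1:ℝ))
        (((hXmeas p).const_mul t).exp.aestronglyMeasurable) (ae_of_all _ fun ω => ?_)
      rw [Real.norm_eq_abs, Real.abs_exp]
      exact Real.exp_le_one_iff.mpr (mul_nonpos_of_nonpos_of_nonneg ht0 (hXnn p ω))
    -- Chernoff bound
    have hchern := measure_le_le_exp_mul_mgf (μ := μ) (X := ∑ p ∈ T, X p) ((c:ℝ)/2) ht0
      (hXindep.integrable_exp_mul_sum hXmeas hint)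
    rw [hXindep.mgf_sum hXmeas T] at hchern
    -- bound each mgf factor
    have hfac : ∀ p ∈ T, mgf (X p) μ t ≤ Real.exp (p₀ * (Real.exp t - 1)) := by
      intro p _
      have hq : p₀ ≤ (μ {ω | Y p ω = saffron m p.1 j₀}).toReal := by
        have h1 := hp p.1 p.2
        have h2 : ENNReal.ofReal p₀ ≤ μ {ω | Y p ω = saffron m p.1 j₀} := by
          simpa using h1
        have := ENNReal.toReal_mono (measure_ne_top μ _) h2
        rwa [ENNReal.toReal_ofReal hp₀0.le] at this
      have hmgf_eq : mgf (X p) μ t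
          = 1 + (Real.exp t - 1) * (μ {ω | Y p ω = saffron m p.1 j₀}).toReal :=
        mgf_bool_indicator_aux μ (hmeas p) (saffron m p.1 j₀) t
      rw [hmgf_eq]
      have het : Real.exp t - 1 ≤ 0 := by
        have : Real.exp t ≤ 1 := Real.exp_le_one_iff.mpr ht0
        linarith
      have h3 : 1 + (Real.exp t - 1) * (μ {ω | Y p ω = saffron m p.1 j₀}).toReal
          ≤ 1 + (Real.exp t - 1) * p₀ := by nlinarith
      have h4 : (Real.exp t - 1) * p₀ + 1 ≤ Real.exp ((Real.exp t - 1) * p₀) :=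
        Real.add_one_le_exp _
      calc 1 + (Real.exp t - 1) * (μ {ω | Y p ω = saffron m p.1 j₀}).toReal
          ≤ 1 + (Real.exp t - 1) * p₀ := h3
        _ ≤ Real.exp ((Real.exp t - 1) * p₀) := by linarith
        _ = Real.exp (p₀ * (Real.exp t - 1)) := by rw [mul_comm]
    have hprod : ∏ p ∈ T, mgf (X p) μ t ≤ Real.exp (p₀ * (Real.exp t - 1)) ^ c := by
      calc ∏ p ∈ T, mgf (X p) μ t ≤ ∏ _p ∈ T, Real.exp (p₀ * (Real.exp t - 1)) :=
            Finset.prod_le_prod (fun p _ => mgf_nonneg) hfac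
        _ = Real.exp (p₀ * (Real.exp t - 1)) ^ c := by rw [Finset.prod_const, hTcard]
    -- event inclusion
    have hsub : bad i ⊆ {ω | (∑ p ∈ T, X p) ω ≤ (c:ℝ)/2} := by
      intro ω hω
      simp only [hbad_def, Set.mem_setOf_eq, not_lt] at hω
      have hsum : (∑ p ∈ T, X p) ω
          = ((Finset.univ.filter (fun s : Fin c => Y (i, s) ω = saffron m i j₀)).card : ℝ) := by
        rw [Finset.sum_apply, hT_def, Finset.sum_image (fun a _ b _ h => hinj h)]
        rw [Finset.card_filter]
        push_cast
        rfl
      simp only [Set.mem_setOf_eq, hsum]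
      have : ((2:ℝ) * (Finset.univ.filter
          (fun s : Fin c => Y (i, s) ω = saffron m i j₀)).card) ≤ (c:ℝ) := by
        exact_mod_cast hω
      linarith
    -- numeric bound on the exponent
    have hnum : Real.exp (-t * ((c:ℝ)/2)) * Real.exp (p₀ * (Real.exp t - 1)) ^ c
        ≤ δ / (2 * m) := by
      rw [← Real.exp_nat_mul, ← Real.exp_add]
      have hL : Real.log (2 * m / δ) ≤ (c:ℝ) * (p₀ * lam ^ 2) / 2 := by
        rw [div_le_iff₀ (by positivity)] at hclb
        linarith
      have hquad : Real.exp t ≤ 1 - lam + lam ^ 2 / 2 := by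
        have := exp_le_quad_aux ht0
        rw [ht_def] at this ⊢
        nlinarith [this]
      have hhalf : (1:ℝ)/2 ≤ (1 - lam) * p₀ := by linarith
      have hexp_le : -t * ((c:ℝ)/2) + (c:ℝ) * (p₀ * (Real.exp t - 1))
          ≤ -Real.log (2 * m / δ) := by
        have hc1 : (1:ℝ) ≤ (c:ℝ) := by exact_mod_cast hc
        have hinner : p₀ * (Real.exp t - 1) ≤ p₀ * (-lam + lam ^ 2 / 2) := by
          nlinarith [hquad, hp₀0.le]
        have hmul : (c:ℝ) * (p₀ * (Real.exp t - 1)) ≤ (c:ℝ) * (p₀ * (-lam + lam ^ 2 / 2)) :=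
          mul_le_mul_of_nonneg_left hinner (Nat.cast_nonneg c)
        have step1 : -t * ((c:ℝ)/2) + (c:ℝ) * (p₀ * (Real.exp t - 1))
            ≤ (c:ℝ) * (lam/2 - p₀ * lam + p₀ * lam ^ 2 / 2) := by
          rw [ht_def]
          rw [ht_def] at hmul
          linarith [hmul]
        have hkey : lam/2 - p₀ * lam + p₀ * lam ^ 2 ≤ 0 := by
          have := mul_le_mul_of_nonneg_left hhalf hlam0.le
          nlinarith [this]
        have hmul2 : (c:ℝ) * (lam/2 - p₀ * lam + p₀ * lam ^ 2) ≤ 0 :=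
          mul_nonpos_of_nonneg_of_nonpos (Nat.cast_nonneg c) hkey
        have step2 : (c:ℝ) * (lam/2 - p₀ * lam + p₀ * lam ^ 2 / 2)
            ≤ -((c:ℝ) * (p₀ * lam ^ 2) / 2) := by nlinarith [hmul2]
        linarith [hL]
      calc Real.exp (-t * ((c:ℝ)/2) + (c:ℝ) * (p₀ * (Real.exp t - 1)))
          ≤ Real.exp (-Real.log (2 * m / δ)) := Real.exp_le_exp.mpr hexp_le
        _ = δ / (2 * m) := by
            rw [Real.exp_neg, Real.exp_log (by positivity)]
            rw [inv_div]
    -- conclude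
    have h5 : (μ (bad i)).toReal ≤ δ / (2 * m) := by
      have h6 : (μ (bad i)).toReal ≤ (μ {ω | (∑ p ∈ T, X p) ω ≤ (c:ℝ)/2}).toReal :=
        ENNReal.toReal_mono (measure_ne_top μ _) (measure_mono hsub)
      have h7 : Real.exp (-t * ((c:ℝ)/2)) * ∏ p ∈ T, mgf (X p) μ t
          ≤ Real.exp (-t * ((c:ℝ)/2)) * Real.exp (p₀ * (Real.exp t - 1)) ^ c :=
        mul_le_mul_of_nonneg_left hprod (Real.exp_pos _).le
      change (μ {ω | (∑ p ∈ T, X p) ω ≤ (c:ℝ)/2}).toReal ≤ _ at hchern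
      linarith [hchern, hnum]
    calc μ (bad i) = ENNReal.ofReal ((μ (bad i)).toReal) :=
          (ENNReal.ofReal_toReal (measure_ne_top μ _)).symm
      _ ≤ ENNReal.ofReal (δ / (2 * m)) := ENNReal.ofReal_le_ofReal h5
  have hBad : μ (⋃ i, bad i) ≤ ENNReal.ofReal δ := by
    calc μ (⋃ i, bad i) ≤ ∑ i : Fin (2 * m), μ (bad i) := measure_iUnion_fintype_le _ _
    _ ≤ ∑ _i : Fin (2 * m), ENNReal.ofReal (δ / (2 * m)) := Finset.sum_le_sum fun i _ => key i
    _ = (2 * m : ℕ) * ENNReal.ofReal (δ / (2 * m)) := by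
        rw [Finset.sum_const, Finset.card_univ, Fintype.card_fin, nsmul_eq_mul]
    _ = ENNReal.ofReal ((2 * m : ℕ) * (δ / (2 * m))) := by
        rw [ENNReal.ofReal_mul (by positivity), ENNReal.ofReal_natCast]
    _ = ENNReal.ofReal δ := by
        congr 1
        push_cast
        field_simp
  have hcompl : {ω | ∀ i : Fin (2 * m), c < 2 * (Finset.univ.filter
        (fun s : Fin c => Y (i, s) ω = saffron m i j₀)).card}
      = (⋃ i, bad i)ᶜ := by
    ext ω
    simp [hbad_def]
  rw [hcompl, prob_compl_eq_one_sub (MeasurableSet.iUnion hbad_meas)]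
  calc ENNReal.ofReal (1 - δ) = 1 - ENNReal.ofReal δ := by
        rw [ENNReal.ofReal_sub 1 hδ0.le, ENNReal.ofReal_one]
  _ ≤ 1 - μ (⋃ i, bad i) := tsub_le_tsub_left hBad 1
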